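/- Let H ⊆ ℕⁿ be an affine semigroup with minimal generators h_1,...,h_m, K a field, and K[H] the semigroup algebra presented as S/I_H where S = K[x_1,...,x_m] is ℤⁿ-graded by deg x_i = h_i. If H' is a homologically pure subsemigroup of H (generated by a subset of the generators, and closed in H in the sense that h ∈ H', h − h_i ∈ H implies h_i ∈ H'), then the graded Betti numbers satisfy β_{i,h}(I_{H'}) ≤ β_{i,h}(I_H) for all i and all h ∈ H'. -/

import Mathlib

open scoped Classical

/-- The `j`-chains over `K` of a simplicial complex `Δ` on a finite vertex set `V`:
the `K`-vector space with basis the faces of `Δ` of cardinality `j` (reduced chains: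
`j = 0` corresponds to the empty face). -/
abbrev Chains (K : Type*) [Field K] {V : Type*} (Δ : Set (Finset V)) (j : ℕ) : Type _ :=
  {F : Finset V // F ∈ Δ ∧ F.card = j} → K

/-- The simplicial boundary map of the (reduced) chain complex of `Δ`:
the basis face `F` of cardinality `j+1` is sent to `∑_{v ∈ F} ± (F \ {v})`,
with the usual signs determined by the linear order on the vertices. -/
noncomputable def bdry (K : Type*) [Field K] {V : Type*} [Fintype V] [LinearOrder V]
    (Δ : Set (Finset V)) (j : ℕ) : Chains K Δ (j + 1) →ₗ[K] Chains K Δ j :=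
  LinearMap.pi fun G => ∑ v ∈ Finset.univ.filter (fun v => v ∉ G.1),
    (if h : insert v G.1 ∈ Δ ∧ (insert v G.1).card = j + 1
      then ((-1 : K) ^ ((G.1.filter (fun w => w < v)).card)) •
        (LinearMap.proj (⟨insert v G.1, h⟩ : {F : Finset V // F ∈ Δ ∧ F.card = j + 1}))
      else 0)

/-- The dimension of the `i`-th reduced simplicial homology `H̃_i(Δ; K)`:
cycles of dimension `i` (faces of cardinality `i + 1`) modulo boundaries. -/
noncomputable def reducedHomologyRank (K : Type*) [Field K] {V : Type*} [Fintype V]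
    [LinearOrder V] (Δ : Set (Finset V)) (i : ℕ) : Cardinal :=
  Module.rank K
    (↥(LinearMap.ker (bdry K Δ i)) ⧸
      Submodule.comap (LinearMap.ker (bdry K Δ i)).subtype (LinearMap.range (bdry K Δ (i + 1))))

/-- The squarefree divisor complex `Δ_h` of `h` with respect to the affine semigroup
`H ⊆ ℕ^n` and its generators `g i`: the faces are the sets `F` of generators with
`h - ∑_{i ∈ F} g i ∈ H`. -/
def sqDivisorComplex {α : Type*} {n : ℕ} (g : α → Fin n → ℕ)
    (H : AddSubmonoid (Fin n → ℕ)) (h : Fin n → ℕ) : Set (Finset α) :=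
  {F | ∃ w ∈ H, (∑ i ∈ F, g i) + w = h}

/-- Let `H ⊆ ℕ^n` be an affine semigroup minimally generated by `g 1, …, g m`, `K` a
field, and `H'` a homologically pure subsemigroup generated by the `g i`, `i ∈ I`.
By the Bruns–Herzog formula, the `ℤⁿ`-graded Betti numbers of the toric ideals are
`β_{i,h}(I_H) = dim_K H̃_i(Δ_h; K)` (and similarly for `H'` using the complex with
faces inside `I`).  Then `β_{i,h}(I_{H'}) ≤ β_{i,h}(I_H)` for all `i` and `h ∈ H'`. -/
theorem stmt_6 {n m : ℕ} (K : Type*) [Field K] (g : Fin m → Fin n → ℕ)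
    (hginj : Function.Injective g)
    (hmin : ∀ i : Fin m, g i ∉ AddSubmonoid.closure (Set.range g \ {g i}))
    (I : Set (Fin m))
    (hpure : ∀ h ∈ AddSubmonoid.closure (g '' I), ∀ i : Fin m,
      (∃ w ∈ AddSubmonoid.closure (Set.range g), g i + w = h) →
        g i ∈ AddSubmonoid.closure (g '' I))
    (i : ℕ) (h : Fin n → ℕ) (hh : h ∈ AddSubmonoid.closure (g '' I)) :
    reducedHomologyRank K
        ({F : Finset (Fin m) | ↑F ⊆ I} ∩
          sqDivisorComplex g (AddSubmonoid.closure (g '' I)) h) i ≤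
      reducedHomologyRank K
        (sqDivisorComplex g (AddSubmonoid.closure (Set.range g)) h) i := by
  have hsub : AddSubmonoid.closure (g '' I) ≤ AddSubmonoid.closure (Set.range g) :=
    AddSubmonoid.closure_mono (by rintro _ ⟨i, _, rfl⟩; exact ⟨i, rfl⟩)
  have key : ∀ w ∈ AddSubmonoid.closure (Set.range g),
      ∀ w', w' ∈ AddSubmonoid.closure (Set.range g) → w + w' = h →
        w ∈ AddSubmonoid.closure (g '' I) := by
    intro w hw
    induction hw using AddSubmonoid.closure_induction with
    | mem x hx =>
      intro w' hw' heq
      obtain ⟨j, rfl⟩ := hx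
      exact hpure h hh j ⟨w', hw', heq⟩
    | zero => exact fun _ _ _ => zero_mem _
    | add a b ha hb iha ihb =>
      intro w' hw' heq
      have haH' := iha (b + w') (add_mem hb hw') (by rw [← add_assoc]; exact heq)
      have hbH' := ihb (a + w') (add_mem ha hw')
        (by rw [← add_assoc, add_comm b a]; exact heq)
      exact add_mem haH' hbH'
  have hset : ({F : Finset (Fin m) | ↑F ⊆ I} ∩
      sqDivisorComplex g (AddSubmonoid.closure (g '' I)) h) =
      sqDivisorComplex g (AddSubmonoid.closure (Set.range g)) h := by
    ext F
    constructor
    · rintro ⟨-, w, hw, heq⟩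
      exact ⟨w, hsub hw, heq⟩
    · rintro ⟨w, hw, heq⟩
      have hwsum : (∑ j ∈ F, g j) ∈ AddSubmonoid.closure (Set.range g) :=
        sum_mem fun j _ => AddSubmonoid.subset_closure ⟨j, rfl⟩
      refine ⟨?_, w, key w hw _ hwsum (by rw [add_comm]; exact heq), heq⟩
      intro j hj
      have hj' : j ∈ F := hj
      have heq' : g j + ((∑ k ∈ F.erase j, g k) + w) = h := by
        rw [← add_assoc, Finset.add_sum_erase _ _ hj']
        exact heq
      have hgi : g j ∈ AddSubmonoid.closure (g '' I) :=
        hpure h hh j ⟨_, add_mem (sum_mem fun k _ => AddSubmonoid.subset_closure ⟨k, rfl⟩) hw,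
          heq'⟩
      by_contra hjI
      apply hmin j
      refine AddSubmonoid.closure_mono ?_ hgi
      rintro _ ⟨k, hkI, rfl⟩
      exact ⟨⟨k, rfl⟩, fun hgk => hjI (hginj hgk ▸ hkI)⟩
  rw [hset]
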